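/- Let G = (V,E) be a finite simple graph and for subsets W ⊆ V let F_W(z) = Σ_{F ∈ 𝔉_W} z^{|F|}, where 𝔉_W is the set of Penrose forests of the induced subgraph G|_W (including the empty forest). Then for any nonempty S ⊆ U ⊆ V: F_U(z) = Σ_{F ∈ 𝔉_{U,S}} z^{|F|} F_{U∖(S ∪ V_F)}(z), where 𝔉_{U,S} is the set of Penrose forests of G|_U each of whose trees contains at least one vertex of S (empty forest included), and V_F denotes the vertex set covered by F. -/

import Mathlib

set_option linter.unusedSectionVars false
set_option maxHeartbeats 800000


open scoped Classical

section Penrose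

variable {V : Type*}

/-- The induced restriction of `G` to a subset `U`, viewed as a graph on `V`
(vertices outside `U` become isolated). -/
def restrictGraph (G : SimpleGraph V) (U : Set V) : SimpleGraph V where
  Adj x y := G.Adj x y ∧ x ∈ U ∧ y ∈ U
  symm := ⟨fun _ _ ⟨h, hx, hy⟩ => ⟨h.symm, hy, hx⟩⟩
  loopless := ⟨fun x ⟨h, _, _⟩ => G.irrefl h⟩

/-- The graph on `V` whose edges are the members of the finite edge set `F`. -/
def edgeGraph (F : Finset (Sym2 V)) : SimpleGraph V :=
  SimpleGraph.fromEdgeSet (F : Set (Sym2 V))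

/-- The support `V_F` of an edge set: the vertices covered by its edges. -/
def suppF (F : Finset (Sym2 V)) : Set V := {x | ∃ e ∈ F, x ∈ e}

/-- `F` is a forest in the graph `G`: a set of edges of `G` spanning no cycle. -/
def IsForestIn (G : SimpleGraph V) (F : Finset (Sym2 V)) : Prop :=
  (F : Set (Sym2 V)) ⊆ G.edgeSet ∧ (edgeGraph F).IsAcyclic

/-- The root of the tree of the forest `F` containing `x`: the least vertex of the
connected component of `x` in the graph of `F`. -/
noncomputable def rootOf [Fintype V] [LinearOrder V] (F : Finset (Sym2 V)) (x : V) : V :=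
  ((Set.toFinite {y | (edgeGraph F).Reachable x y}).toFinset).min'
    ⟨x, by simp [Set.Finite.mem_toFinset]⟩

/-- The depth of `x` in its tree of the forest `F` (distance to the root of its
component). -/
noncomputable def depthF [Fintype V] [LinearOrder V] (F : Finset (Sym2 V)) (x : V) : ℕ :=
  (edgeGraph F).dist (rootOf F x) x

/-- `F` is a Penrose forest of `G` (with each tree rooted at its least vertex):
`F` is a forest in `G` and for every edge `{x,y}` of `G` joining two vertices of a
same tree of `F` but not belonging to `F`, the depths of `x` and `y` differ, and if
`d(y) = d(x) − 1` then `y` precedes the father of `x` (and symmetrically). -/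
def IsPenroseForestIn [Fintype V] [LinearOrder V] (G : SimpleGraph V)
    (F : Finset (Sym2 V)) : Prop :=
  IsForestIn G F ∧
  ∀ x y : V, G.Adj x y → (edgeGraph F).Reachable x y → s(x, y) ∉ F →
    depthF F x ≠ depthF F y ∧
    (depthF F y + 1 = depthF F x →
      ∀ p : V, (edgeGraph F).Adj x p → depthF F p + 1 = depthF F x → y < p)

/-- The Penrose forest generating polynomial `F_W(z)` of the induced subgraph
`G|_W` (the empty forest contributes 1). -/
noncomputable def penroseGenFun [Fintype V] [LinearOrder V] (G : SimpleGraph V)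
    (W : Set V) (z : ℂ) : ℂ :=
  ∑ F ∈ Finset.univ.filter
      (fun F : Finset (Sym2 V) => IsPenroseForestIn (restrictGraph G W) F),
    z ^ F.card

variable [Fintype V] [LinearOrder V]

lemma edgeGraph_adj {F : Finset (Sym2 V)} {x y : V} :
    (edgeGraph F).Adj x y ↔ s(x, y) ∈ F ∧ x ≠ y := by
  simp [edgeGraph, SimpleGraph.fromEdgeSet_adj]

lemma mem_suppF_of_edge {F : Finset (Sym2 V)} {e : Sym2 V} {x : V}
    (he : e ∈ F) (hx : x ∈ e) : x ∈ suppF F := ⟨e, he, hx⟩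

lemma edgeGraph_mono {F₁ F₂ : Finset (Sym2 V)} (h : F₁ ⊆ F₂) :
    edgeGraph F₁ ≤ edgeGraph F₂ := by
  intro x y hxy
  rw [edgeGraph_adj] at hxy ⊢
  exact ⟨h hxy.1, hxy.2⟩

lemma edgeGraph_union_left {F₁ F₂ : Finset (Sym2 V)} :
    edgeGraph F₁ ≤ edgeGraph (F₁ ∪ F₂) := edgeGraph_mono Finset.subset_union_left

lemma reach_mem_suppF {F : Finset (Sym2 V)} {x y : V}
    (h : (edgeGraph F).Reachable x y) (hne : x ≠ y) : y ∈ suppF F := by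
  obtain ⟨p⟩ := h
  cases hp : p.reverse with
  | nil => exact absurd rfl hne
  | cons h' q => exact ⟨_, (edgeGraph_adj.mp h').1, by simp⟩

lemma walk_edges_left {F₁ F₂ : Finset (Sym2 V)}
    (hdis : ∀ a ∈ suppF F₁, a ∉ suppF F₂) {x y : V}
    (p : (edgeGraph (F₁ ∪ F₂)).Walk x y) (hx : x ∉ suppF F₂) :
    ∀ e ∈ p.edges, e ∈ (edgeGraph F₁).edgeSet := by
  induction p with
  | nil => simp
  | @cons a b c h p ih =>
    intro e he
    obtain ⟨hmem, hne⟩ := edgeGraph_adj.mp h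
    have h1 : s(a, b) ∈ F₁ := by
      rcases Finset.mem_union.mp hmem with h' | h'
      · exact h'
      · exact absurd (mem_suppF_of_edge h' (by simp)) hx
    have hb : b ∉ suppF F₂ := hdis b (mem_suppF_of_edge h1 (by simp))
    simp only [SimpleGraph.Walk.edges_cons, List.mem_cons] at he
    rcases he with rfl | he'
    · exact (SimpleGraph.mem_edgeSet _).mpr (edgeGraph_adj.mpr ⟨h1, hne⟩)
    · exact ih hb e he'


lemma reachable_union_left {F₁ F₂ : Finset (Sym2 V)}
    (hdis : ∀ a ∈ suppF F₁, a ∉ suppF F₂) {x y : V} (hx : x ∉ suppF F₂) :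
    (edgeGraph (F₁ ∪ F₂)).Reachable x y ↔ (edgeGraph F₁).Reachable x y := by
  constructor
  · rintro ⟨p⟩
    exact ⟨p.transfer _ (walk_edges_left hdis p hx)⟩
  · exact fun h => h.mono edgeGraph_union_left

lemma dist_union_left {F₁ F₂ : Finset (Sym2 V)}
    (hdis : ∀ a ∈ suppF F₁, a ∉ suppF F₂) {x y : V} (hx : x ∉ suppF F₂) :
    (edgeGraph (F₁ ∪ F₂)).dist x y = (edgeGraph F₁).dist x y := by
  by_cases hr : (edgeGraph (F₁ ∪ F₂)).Reachable x y
  · have hr1 : (edgeGraph F₁).Reachable x y := (reachable_union_left hdis hx).mp hr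
    apply le_antisymm
    · obtain ⟨p, hp⟩ := hr1.exists_walk_length_eq_dist
      calc (edgeGraph (F₁ ∪ F₂)).dist x y ≤ (p.mapLe edgeGraph_union_left).length :=
            SimpleGraph.dist_le _
        _ = (edgeGraph F₁).dist x y := by simpa using hp
    · obtain ⟨p, hp⟩ := hr.exists_walk_length_eq_dist
      calc (edgeGraph F₁).dist x y ≤ (p.transfer _ (walk_edges_left hdis p hx)).length :=
            SimpleGraph.dist_le _
        _ = (edgeGraph (F₁ ∪ F₂)).dist x y := by
            rw [SimpleGraph.Walk.length_transfer]; exact hp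
  · have hr1 : ¬ (edgeGraph F₁).Reachable x y := fun h => hr (h.mono edgeGraph_union_left)
    rw [SimpleGraph.dist_eq_zero_of_not_reachable hr,
      SimpleGraph.dist_eq_zero_of_not_reachable hr1]

lemma reachable_rootOf (F : Finset (Sym2 V)) (x : V) :
    (edgeGraph F).Reachable x (rootOf F x) := by
  have := Finset.min'_mem ((Set.toFinite {y | (edgeGraph F).Reachable x y}).toFinset)
    ⟨x, by simp [Set.Finite.mem_toFinset]⟩
  simpa [Set.Finite.mem_toFinset, rootOf] using this

lemma rootOf_union_left {F₁ F₂ : Finset (Sym2 V)}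
    (hdis : ∀ a ∈ suppF F₁, a ∉ suppF F₂) {x : V} (hx : x ∉ suppF F₂) :
    rootOf (F₁ ∪ F₂) x = rootOf F₁ x := by
  apply le_antisymm
  · apply Finset.min'_le
    simp only [Set.Finite.mem_toFinset, Set.mem_setOf_eq]
    exact (reachable_rootOf F₁ x).mono edgeGraph_union_left
  · apply Finset.min'_le
    simp only [Set.Finite.mem_toFinset, Set.mem_setOf_eq]
    exact (reachable_union_left hdis hx).mp (reachable_rootOf (F₁ ∪ F₂) x)

lemma rootOf_not_supp {F₁ F₂ : Finset (Sym2 V)}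
    (hdis : ∀ a ∈ suppF F₁, a ∉ suppF F₂) {x : V} (hx : x ∉ suppF F₂) :
    rootOf F₁ x ∉ suppF F₂ := by
  by_cases hxr : x = rootOf F₁ x
  · exact hxr ▸ hx
  · exact hdis _ (reach_mem_suppF (reachable_rootOf F₁ x) hxr)

lemma depthF_union_left {F₁ F₂ : Finset (Sym2 V)}
    (hdis : ∀ a ∈ suppF F₁, a ∉ suppF F₂) {x : V} (hx : x ∉ suppF F₂) :
    depthF (F₁ ∪ F₂) x = depthF F₁ x := by
  unfold depthF
  rw [rootOf_union_left hdis hx, dist_union_left hdis (rootOf_not_supp hdis hx)]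


lemma hdis_symm {F₁ F₂ : Finset (Sym2 V)} (hdis : ∀ a ∈ suppF F₁, a ∉ suppF F₂) :
    ∀ a ∈ suppF F₂, a ∉ suppF F₁ := fun a h h1 => hdis a h1 h

lemma reachable_union_right {F₁ F₂ : Finset (Sym2 V)}
    (hdis : ∀ a ∈ suppF F₁, a ∉ suppF F₂) {x y : V} (hx : x ∉ suppF F₁) :
    (edgeGraph (F₁ ∪ F₂)).Reachable x y ↔ (edgeGraph F₂).Reachable x y := by
  rw [Finset.union_comm]
  exact reachable_union_left (hdis_symm hdis) hx

lemma depthF_union_right {F₁ F₂ : Finset (Sym2 V)}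
    (hdis : ∀ a ∈ suppF F₁, a ∉ suppF F₂) {x : V} (hx : x ∉ suppF F₁) :
    depthF (F₁ ∪ F₂) x = depthF F₂ x := by
  rw [Finset.union_comm]
  exact depthF_union_left (hdis_symm hdis) hx

lemma isAcyclic_subset {F' F : Finset (Sym2 V)} (hsub : F' ⊆ F)
    (hF : (edgeGraph F).IsAcyclic) : (edgeGraph F').IsAcyclic := by
  intro v c hc
  exact hF (c.transfer _ (fun e he =>
    SimpleGraph.edgeSet_mono (edgeGraph_mono hsub) (c.edges_subset_edgeSet he)))
    (hc.transfer _)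

lemma notCycle_left {F₁ F₂ : Finset (Sym2 V)}
    (hdis : ∀ a ∈ suppF F₁, a ∉ suppF F₂) (h1 : (edgeGraph F₁).IsAcyclic)
    {v : V} (hv : v ∉ suppF F₂) (c : (edgeGraph (F₁ ∪ F₂)).Walk v v) (hc : c.IsCycle) :
    False :=
  h1 (c.transfer _ (walk_edges_left hdis c hv)) (hc.transfer _)

lemma isAcyclic_union {F₁ F₂ : Finset (Sym2 V)}
    (hdis : ∀ a ∈ suppF F₁, a ∉ suppF F₂) (h1 : (edgeGraph F₁).IsAcyclic)
    (h2 : (edgeGraph F₂).IsAcyclic) : (edgeGraph (F₁ ∪ F₂)).IsAcyclic := by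
  intro v c
  by_cases hv : v ∈ suppF F₂
  · have hv1 : v ∉ suppF F₁ := fun h => hdis v h hv
    revert c
    rw [Finset.union_comm F₁ F₂]
    exact fun c hc => notCycle_left (hdis_symm hdis) h2 hv1 c hc
  · exact notCycle_left hdis h1 hv c

lemma suppF_subset {G : SimpleGraph V} {W : Set V} {F : Finset (Sym2 V)}
    (hF : (F : Set (Sym2 V)) ⊆ (restrictGraph G W).edgeSet) : suppF F ⊆ W := by
  rintro a ⟨e, he, hae⟩
  induction e with
  | _ u v =>
    have hadj : (restrictGraph G W).Adj u v := (SimpleGraph.mem_edgeSet _).mp (hF he)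
    rcases Sym2.mem_iff.mp hae with rfl | rfl
    · exact hadj.2.1
    · exact hadj.2.2

lemma edge_eq_of_mem {e : Sym2 V} {a x : V} (ha : a ∈ e) (hx : x ∈ e) (hne : a ≠ x) :
    e = s(a, x) := by
  induction e with
  | _ u v =>
    rcases Sym2.mem_iff.mp ha with rfl | rfl <;> rcases Sym2.mem_iff.mp hx with rfl | rfl
    · exact absurd rfl hne
    · rfl
    · exact Sym2.eq_swap
    · exact absurd rfl hne


lemma restrictGraph_adj {G : SimpleGraph V} {W : Set V} {x y : V} :
    (restrictGraph G W).Adj x y ↔ G.Adj x y ∧ x ∈ W ∧ y ∈ W := Iff.rfl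

variable (S : Set V)

noncomputable def part1 (F : Finset (Sym2 V)) : Finset (Sym2 V) :=
  F.filter (fun e => ∃ x ∈ e, ∃ s ∈ S, (edgeGraph F).Reachable x s)

noncomputable def part2 (F : Finset (Sym2 V)) : Finset (Sym2 V) :=
  F.filter (fun e => ¬ ∃ x ∈ e, ∃ s ∈ S, (edgeGraph F).Reachable x s)

variable {S}

lemma part1_union_part2 {F : Finset (Sym2 V)} : part1 S F ∪ part2 S F = F :=
  Finset.filter_union_filter_not_eq _ F

lemma part2_eq_sdiff {F : Finset (Sym2 V)} : part2 S F = F \ part1 S F := by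
  rw [part1, part2, Finset.filter_not]

lemma reach_S_of_mem_supp_part1 {F : Finset (Sym2 V)} {a : V}
    (ha : a ∈ suppF (part1 S F)) : ∃ s ∈ S, (edgeGraph F).Reachable a s := by
  obtain ⟨e, he, hae⟩ := ha
  obtain ⟨heF, x, hxe, s, hs, hr⟩ := Finset.mem_filter.mp he
  by_cases hax : a = x
  · exact ⟨s, hs, hax ▸ hr⟩
  · have : (edgeGraph F).Adj a x := edgeGraph_adj.mpr ⟨edge_eq_of_mem hae hxe hax ▸ heF, hax⟩
    exact ⟨s, hs, this.reachable.trans hr⟩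

lemma not_reach_S_of_mem_supp_part2 {F : Finset (Sym2 V)} {a : V}
    (ha : a ∈ suppF (part2 S F)) : ¬ ∃ s ∈ S, (edgeGraph F).Reachable a s := by
  obtain ⟨e, he, hae⟩ := ha
  obtain ⟨heF, hnp⟩ := Finset.mem_filter.mp he
  rintro ⟨s, hs, hr⟩
  exact hnp ⟨a, hae, s, hs, hr⟩

lemma hdis_parts {F : Finset (Sym2 V)} :
    ∀ a ∈ suppF (part1 S F), a ∉ suppF (part2 S F) := fun a h1 h2 =>
  not_reach_S_of_mem_supp_part2 h2 (reach_S_of_mem_supp_part1 h1)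

lemma part1_meets {F : Finset (Sym2 V)} :
    ∀ x ∈ suppF (part1 S F), ∃ s ∈ S, (edgeGraph (part1 S F)).Reachable x s := by
  intro x hx
  obtain ⟨s, hs, hr⟩ := reach_S_of_mem_supp_part1 hx
  refine ⟨s, hs, (reachable_union_left hdis_parts (hdis_parts x hx)).mp ?_⟩
  rw [part1_union_part2]
  exact hr

variable {G : SimpleGraph V} {U : Set V}

lemma part1_penrose {F : Finset (Sym2 V)}
    (hP : IsPenroseForestIn (restrictGraph G U) F) :
    IsPenroseForestIn (restrictGraph G U) (part1 S F) := by
  obtain ⟨⟨hsub, hacyc⟩, hpen⟩ := hP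
  have hd : ∀ a ∈ suppF (part1 S F), a ∉ suppF (part2 S F) := hdis_parts
  have hF : part1 S F ∪ part2 S F = F := part1_union_part2
  refine ⟨⟨fun e he => hsub (Finset.filter_subset _ _ he), isAcyclic_subset (Finset.filter_subset _ _) hacyc⟩, ?_⟩
  intro x y hadj hreach hnmem
  have hxy : x ≠ y := (restrictGraph_adj.mp hadj).1.ne
  have hx1 : x ∈ suppF (part1 S F) := reach_mem_suppF hreach.symm hxy.symm
  have hy1 : y ∈ suppF (part1 S F) := reach_mem_suppF hreach hxy
  have hx2 : x ∉ suppF (part2 S F) := hd x hx1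
  have hy2 : y ∉ suppF (part2 S F) := hd y hy1
  have hsxy : s(x, y) ∉ F := by
    intro hmem
    obtain ⟨s, hs, hr⟩ := reach_S_of_mem_supp_part1 hx1
    exact hnmem (Finset.mem_filter.mpr ⟨hmem, x, by simp, s, hs, hr⟩)
  have hreachF : (edgeGraph F).Reachable x y := by
    rw [← hF]; exact hreach.mono edgeGraph_union_left
  obtain ⟨hq1, hq2⟩ := hpen x y hadj hreachF hsxy
  have ex : depthF F x = depthF (part1 S F) x := by
    conv_lhs => rw [← hF]
    exact depthF_union_left hd hx2
  have ey : depthF F y = depthF (part1 S F) y := by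
    conv_lhs => rw [← hF]
    exact depthF_union_left hd hy2
  refine ⟨by rw [← ex, ← ey]; exact hq1, ?_⟩
  intro hdy p hadjp hdp
  have hp1 : p ∈ suppF (part1 S F) := mem_suppF_of_edge (edgeGraph_adj.mp hadjp).1 (by simp)
  have ep : depthF F p = depthF (part1 S F) p := by
    conv_lhs => rw [← hF]
    exact depthF_union_left hd (hd p hp1)
  have hadjpF : (edgeGraph F).Adj x p := by
    rw [← hF]; exact edgeGraph_union_left hadjp
  exact hq2 (by rw [ex, ey]; exact hdy) p hadjpF (by rw [ex, ep]; exact hdp)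

lemma part2_penrose {F : Finset (Sym2 V)}
    (hP : IsPenroseForestIn (restrictGraph G U) F) :
    IsPenroseForestIn (restrictGraph G (U \ (S ∪ suppF (part1 S F)))) (part2 S F) := by
  obtain ⟨⟨hsub, hacyc⟩, hpen⟩ := hP
  have hd : ∀ a ∈ suppF (part1 S F), a ∉ suppF (part2 S F) := hdis_parts
  have hF : part1 S F ∪ part2 S F = F := part1_union_part2
  constructor
  · refine ⟨?_, isAcyclic_subset (Finset.filter_subset _ _) hacyc⟩
    intro e he
    have heF : e ∈ F := Finset.filter_subset _ _ he
    have he2 : e ∈ part2 S F := he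
    induction e with
    | _ u v =>
      have hadj : (restrictGraph G U).Adj u v := (SimpleGraph.mem_edgeSet _).mp (hsub heF)
      obtain ⟨hGuv, hu, hv⟩ := restrictGraph_adj.mp hadj
      have key : ∀ w ∈ (s(u,v) : Sym2 V), w ∈ U → w ∈ U \ (S ∪ suppF (part1 S F)) := by
        intro w hw hwU
        have hw2 : w ∈ suppF (part2 S F) := mem_suppF_of_edge he2 hw
        refine ⟨hwU, ?_⟩
        rintro (hwS | hw1)
        · exact not_reach_S_of_mem_supp_part2 hw2 ⟨w, hwS, SimpleGraph.Reachable.refl w⟩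
        · exact hd w hw1 hw2
      exact (SimpleGraph.mem_edgeSet _).mpr
        (restrictGraph_adj.mpr ⟨hGuv, key u (by simp) hu, key v (by simp) hv⟩)
  · intro x y hadj hreach hnmem
    have hxy : x ≠ y := (restrictGraph_adj.mp hadj).1.ne
    have hx2 : x ∈ suppF (part2 S F) := reach_mem_suppF hreach.symm hxy.symm
    have hy2 : y ∈ suppF (part2 S F) := reach_mem_suppF hreach hxy
    have hx1 : x ∉ suppF (part1 S F) := fun h => hd x h hx2
    have hsxy : s(x, y) ∉ F := by
      intro hmem
      rw [← hF] at hmem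
      rcases Finset.mem_union.mp hmem with h | h
      · exact hx1 (mem_suppF_of_edge h (by simp))
      · exact hnmem h
    have hadjU : (restrictGraph G U).Adj x y :=
      restrictGraph_adj.mpr ⟨(restrictGraph_adj.mp hadj).1,
        (restrictGraph_adj.mp hadj).2.1.1, (restrictGraph_adj.mp hadj).2.2.1⟩
    have hreachF : (edgeGraph F).Reachable x y := by
      rw [← hF]; exact hreach.mono (edgeGraph_mono Finset.subset_union_right)
    obtain ⟨hq1, hq2⟩ := hpen x y hadjU hreachF hsxy
    have ex : depthF F x = depthF (part2 S F) x := by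
      conv_lhs => rw [← hF]
      exact depthF_union_right hd hx1
    have ey : depthF F y = depthF (part2 S F) y := by
      conv_lhs => rw [← hF]
      exact depthF_union_right hd (fun h => hd y h hy2)
    refine ⟨by rw [← ex, ← ey]; exact hq1, ?_⟩
    intro hdy p hadjp hdp
    have hp2 : p ∈ suppF (part2 S F) := mem_suppF_of_edge (edgeGraph_adj.mp hadjp).1 (by simp)
    have ep : depthF F p = depthF (part2 S F) p := by
      conv_lhs => rw [← hF]
      exact depthF_union_right hd (fun h => hd p h hp2)
    have hadjpF : (edgeGraph F).Adj x p := by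
      rw [← hF]; exact edgeGraph_mono Finset.subset_union_right hadjp
    exact hq2 (by rw [ex, ey]; exact hdy) p hadjpF (by rw [ex, ep]; exact hdp)


section Backward

variable {F₁ F₂ : Finset (Sym2 V)}
variable (h1 : IsPenroseForestIn (restrictGraph G U) F₁)
variable (hmeet : ∀ x ∈ suppF F₁, ∃ s ∈ S, (edgeGraph F₁).Reachable x s)
variable (h2 : IsPenroseForestIn (restrictGraph G (U \ (S ∪ suppF F₁))) F₂)

include h2 in
lemma supp2_sub : suppF F₂ ⊆ U \ (S ∪ suppF F₁) := suppF_subset h2.1.1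

include h2 in
lemma hd_bw : ∀ a ∈ suppF F₁, a ∉ suppF F₂ := fun a ha1 ha2 =>
  (supp2_sub h2 ha2).2 (Or.inr ha1)

include h2 in
lemma disjoint_bw : Disjoint F₁ F₂ := by
  rw [Finset.disjoint_left]
  intro e he1 he2
  induction e with
  | _ u v =>
    exact hd_bw h2 u (mem_suppF_of_edge he1 (by simp)) (mem_suppF_of_edge he2 (by simp))

include h1 h2 in
lemma union_penrose : IsPenroseForestIn (restrictGraph G U) (F₁ ∪ F₂) := by
  have hss := supp2_sub h2
  obtain ⟨⟨hsub1, hacyc1⟩, hpen1⟩ := h1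
  have hsub2 := h2.1.1
  have hacyc2 := h2.1.2
  have hpen2 := h2.2
  have hd : ∀ a ∈ suppF F₁, a ∉ suppF F₂ := fun a ha1 ha2 => (hss ha2).2 (Or.inr ha1)
  constructor
  · refine ⟨?_, isAcyclic_union hd hacyc1 hacyc2⟩
    intro e he
    rcases Finset.mem_union.mp he with h | h
    · exact hsub1 h
    · induction e with
      | _ u v =>
        obtain ⟨hG, hu, hv⟩ := restrictGraph_adj.mp ((SimpleGraph.mem_edgeSet _).mp (hsub2 h))
        exact (SimpleGraph.mem_edgeSet _).mpr (restrictGraph_adj.mpr ⟨hG, hu.1, hv.1⟩)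
  · intro x y hadj hreach hnmem
    have hxy : x ≠ y := (restrictGraph_adj.mp hadj).1.ne
    by_cases hx2 : x ∈ suppF F₂
    · have hx1 : x ∉ suppF F₁ := fun h => hd x h hx2
      have hreach2 : (edgeGraph F₂).Reachable x y := (reachable_union_right hd hx1).mp hreach
      have hy2 : y ∈ suppF F₂ := reach_mem_suppF hreach2 hxy
      have hy1 : y ∉ suppF F₁ := fun h => hd y h hy2
      have hadj2 : (restrictGraph G (U \ (S ∪ suppF F₁))).Adj x y :=
        restrictGraph_adj.mpr ⟨(restrictGraph_adj.mp hadj).1, hss hx2, hss hy2⟩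
      have hnm2 : s(x, y) ∉ F₂ := fun h => hnmem (Finset.mem_union_right _ h)
      obtain ⟨hq1, hq2⟩ := hpen2 x y hadj2 hreach2 hnm2
      have ex : depthF (F₁ ∪ F₂) x = depthF F₂ x := depthF_union_right hd hx1
      have ey : depthF (F₁ ∪ F₂) y = depthF F₂ y := depthF_union_right hd hy1
      refine ⟨by rw [ex, ey]; exact hq1, ?_⟩
      intro hdy p hadjp hdp
      obtain ⟨hmem, hnep⟩ := edgeGraph_adj.mp hadjp
      have hmem2 : s(x, p) ∈ F₂ := by
        rcases Finset.mem_union.mp hmem with h | h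
        · exact absurd (mem_suppF_of_edge h (by simp)) hx1
        · exact h
      have hp2 : p ∈ suppF F₂ := mem_suppF_of_edge hmem2 (by simp)
      have ep : depthF (F₁ ∪ F₂) p = depthF F₂ p :=
        depthF_union_right hd (fun h => hd p h hp2)
      exact hq2 (by rw [← ex, ← ey]; exact hdy) p (edgeGraph_adj.mpr ⟨hmem2, hnep⟩)
        (by rw [← ex, ← ep]; exact hdp)
    · have hreach1 : (edgeGraph F₁).Reachable x y := (reachable_union_left hd hx2).mp hreach
      have hy1 : y ∈ suppF F₁ := reach_mem_suppF hreach1 hxy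
      have hy2 : y ∉ suppF F₂ := hd y hy1
      have hnm1 : s(x, y) ∉ F₁ := fun h => hnmem (Finset.mem_union_left _ h)
      obtain ⟨hq1, hq2⟩ := hpen1 x y hadj hreach1 hnm1
      have ex : depthF (F₁ ∪ F₂) x = depthF F₁ x := depthF_union_left hd hx2
      have ey : depthF (F₁ ∪ F₂) y = depthF F₁ y := depthF_union_left hd hy2
      refine ⟨by rw [ex, ey]; exact hq1, ?_⟩
      intro hdy p hadjp hdp
      obtain ⟨hmem, hnep⟩ := edgeGraph_adj.mp hadjp
      have hmem1 : s(x, p) ∈ F₁ := by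
        rcases Finset.mem_union.mp hmem with h | h
        · exact h
        · exact absurd (mem_suppF_of_edge h (Sym2.mem_mk_left x p)) hx2
      have hp1 : p ∈ suppF F₁ := mem_suppF_of_edge hmem1 (by simp)
      have ep : depthF (F₁ ∪ F₂) p = depthF F₁ p := depthF_union_left hd (hd p hp1)
      exact hq2 (by rw [← ex, ← ey]; exact hdy) p (edgeGraph_adj.mpr ⟨hmem1, hnep⟩)
        (by rw [← ex, ← ep]; exact hdp)

include hmeet h2 in
lemma part1_union_eq : part1 S (F₁ ∪ F₂) = F₁ := by
  have hd : ∀ a ∈ suppF F₁, a ∉ suppF F₂ := hd_bw h2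
  ext e
  simp only [part1, Finset.mem_filter, Finset.mem_union]
  constructor
  · rintro ⟨he12, x, hxe, s, hs, hr⟩
    rcases he12 with h | h
    · exact h
    · exfalso
      have hx2 : x ∈ suppF F₂ := mem_suppF_of_edge h hxe
      have hx1 : x ∉ suppF F₁ := fun hh => hd x hh hx2
      have hr2 : (edgeGraph F₂).Reachable x s := (reachable_union_right hd hx1).mp hr
      by_cases hxs : x = s
      · exact (supp2_sub h2 hx2).2 (Or.inl (hxs ▸ hs))
      · exact (supp2_sub h2 (reach_mem_suppF hr2 hxs)).2 (Or.inl hs)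
  · intro he1
    refine ⟨Or.inl he1, ?_⟩
    induction e with
    | _ u v =>
      obtain ⟨s, hs, hr⟩ := hmeet u (mem_suppF_of_edge he1 (by simp))
      exact ⟨u, by simp, s, hs, hr.mono edgeGraph_union_left⟩

include hmeet h2 in
lemma part2_union_eq : part2 S (F₁ ∪ F₂) = F₂ := by
  rw [part2_eq_sdiff, part1_union_eq hmeet h2,
    Finset.union_sdiff_cancel_left (disjoint_bw h2)]

end Backward


end Penrose

/-- For any nonempty S ⊆ U ⊆ V,
F_U(z) = Σ_{F ∈ 𝔉_{U,S}} z^{|F|} · F_{U∖(S ∪ V_F)}(z), where 𝔉_{U,S} is the set of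
Penrose forests of G|_U each of whose trees contains a vertex of S. -/
theorem stmt_17 {V : Type*} [Fintype V] [LinearOrder V] (G : SimpleGraph V)
    (U S : Set V) (hS : S.Nonempty) (hSU : S ⊆ U) (z : ℂ) :
    penroseGenFun G U z =
      ∑ F ∈ Finset.univ.filter (fun F : Finset (Sym2 V) =>
          IsPenroseForestIn (restrictGraph G U) F ∧
          ∀ x ∈ suppF F, ∃ s ∈ S, (edgeGraph F).Reachable x s),
        z ^ F.card * penroseGenFun G (U \ (S ∪ suppF F)) z := by
  simp only [penroseGenFun, Finset.mul_sum]
  rw [Finset.sum_sigma']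
  refine Finset.sum_bij'
    (fun F _ => (⟨part1 S F, part2 S F⟩ : Σ _ : Finset (Sym2 V), Finset (Sym2 V)))
    (fun p _ => p.1 ∪ p.2) ?_ ?_ ?_ ?_ ?_
  · intro F hF
    have hP := (Finset.mem_filter.mp hF).2
    rw [Finset.mem_sigma]
    exact ⟨Finset.mem_filter.mpr ⟨Finset.mem_univ _, part1_penrose hP, part1_meets⟩,
      Finset.mem_filter.mpr ⟨Finset.mem_univ _, part2_penrose hP⟩⟩
  · intro p hp
    obtain ⟨hp1, hp2⟩ := Finset.mem_sigma.mp hp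
    obtain ⟨hpen1, hmeet⟩ := (Finset.mem_filter.mp hp1).2
    have hpen2 := (Finset.mem_filter.mp hp2).2
    exact Finset.mem_filter.mpr ⟨Finset.mem_univ _, union_penrose hpen1 hpen2⟩
  · intro F hF
    exact part1_union_part2
  · intro p hp
    obtain ⟨hp1, hp2⟩ := Finset.mem_sigma.mp hp
    obtain ⟨hpen1, hmeet⟩ := (Finset.mem_filter.mp hp1).2
    have hpen2 := (Finset.mem_filter.mp hp2).2
    obtain ⟨a, b⟩ := p
    dsimp only
    rw [show part1 S (a ∪ b) = a from part1_union_eq hmeet hpen2,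
      show part2 S (a ∪ b) = b from part2_union_eq hmeet hpen2]
  · intro F hF
    have hP := (Finset.mem_filter.mp hF).2
    have hcard : F.card = (part1 S F).card + (part2 S F).card := by
      rw [part1, part2]
      exact (Finset.card_filter_add_card_filter_not _).symm
    rw [hcard, pow_add]
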